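/- For all n ≥ 0, the inversion polynomials over fixed-point-free involutions satisfy the recurrence (1−q²)·J_{n+2}^{inv}(q) = q(1−q^{2(n+1)})·J_n^{inv}(q), where J_n^{inv}(q) = Σ_{σ∈J_n} q^{inv(σ)}, with J_0^{inv}(q) = 1. -/

import Mathlib

noncomputable section
open Finset Polynomial

/-- The set of involutions in the symmetric group on `Fin n`. -/
def Invols (n : ℕ) : Finset (Equiv.Perm (Fin n)) :=
  Finset.univ.filter (fun σ => σ * σ = 1)

/-- The set of fixed-point-free involutions in the symmetric group on `Fin n`. -/
def FPFInvols (n : ℕ) : Finset (Equiv.Perm (Fin n)) :=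
  Finset.univ.filter (fun σ => σ * σ = 1 ∧ ∀ i, σ i ≠ i)

/-- The number of inversions of a permutation of `Fin n`. -/
def invStat {n : ℕ} (σ : Equiv.Perm (Fin n)) : ℕ :=
  ((Finset.univ : Finset (Fin n × Fin n)).filter
    (fun p => p.1 < p.2 ∧ σ p.2 < σ p.1)).card

/-- The generating polynomial of inversions over involutions of `S_n`. -/
def IPoly (n : ℕ) : Polynomial ℚ := ∑ σ ∈ Invols n, Polynomial.X ^ invStat σ

/-- The generating polynomial of inversions over fixed-point-free involutions of `S_n`. -/
def JPoly (n : ℕ) : Polynomial ℚ := ∑ σ ∈ FPFInvols n, Polynomial.X ^ invStat σ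

namespace FPFRec
variable {n : ℕ}

def ins (k : Fin (n+1)) (i : Fin n) : Fin (n+2) := (k.succAbove i).castSucc

lemma ins_lt_ins_iff {k : Fin (n+1)} {i j : Fin n} : ins k i < ins k j ↔ i < j := by
  simp [ins, Fin.succAbove_lt_succAbove_iff]

lemma ins_inj (k : Fin (n+1)) : Function.Injective (ins k) := fun i j h =>
  Fin.succAbove_right_injective (Fin.castSucc_injective _ h)

lemma ins_ne_last {k : Fin (n+1)} (i : Fin n) : ins k i ≠ Fin.last (n+1) :=
  Fin.ne_of_lt (Fin.castSucc_lt_last _)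

lemma ins_ne_csk {k : Fin (n+1)} (i : Fin n) : ins k i ≠ k.castSucc :=
  fun h => Fin.succAbove_ne k i (Fin.castSucc_injective _ h)

lemma cases3 (k : Fin (n+1)) (x : Fin (n+2)) :
    x = Fin.last (n+1) ∨ x = k.castSucc ∨ ∃ i, x = ins k i := by
  by_cases h : x = Fin.last (n+1)
  · exact Or.inl h
  obtain ⟨y, rfl⟩ := Fin.exists_castSucc_eq.mpr h
  by_cases hk : y = k
  · exact Or.inr (Or.inl (by rw [hk]))
  obtain ⟨i, hi⟩ := Fin.exists_succAbove_eq hk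
  exact Or.inr (Or.inr ⟨i, by rw [ins, hi]⟩)

def gf (k : Fin (n+1)) (t : Fin n → Fin n) : Fin (n+2) → Fin (n+2) :=
  Fin.snoc (k.insertNth (Fin.last (n+1)) (fun i => ins k (t i))) k.castSucc

@[simp] lemma gf_last {k : Fin (n+1)} {t} : gf k t (Fin.last (n+1)) = k.castSucc :=
  Fin.snoc_last ..

@[simp] lemma gf_csk {k : Fin (n+1)} {t} : gf k t k.castSucc = Fin.last (n+1) := by
  simp [gf]

@[simp] lemma gf_ins {k : Fin (n+1)} {t} (i : Fin n) : gf k t (ins k i) = ins k (t i) := by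
  simp [gf, ins]

def gp (k : Fin (n+1)) (τ : Equiv.Perm (Fin n)) : Equiv.Perm (Fin (n+2)) where
  toFun := gf k τ
  invFun := gf k τ.symm
  left_inv x := by
    rcases cases3 k x with h | h | ⟨i, h⟩ <;> subst h <;> simp
  right_inv x := by
    rcases cases3 k x with h | h | ⟨i, h⟩ <;> subst h <;> simp

@[simp] lemma gp_apply {k : Fin (n+1)} {τ} (x) : gp k τ x = gf k τ x := rfl

lemma card_val_between (m c d : ℕ) (hd : d ≤ m) :
    ((Finset.univ : Finset (Fin m)).filter fun t => c ≤ t.val ∧ t.val < d).card = d - c := by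
  classical
  rw [← Nat.card_Ico c d, ← Finset.card_image_of_injective _ (Fin.val_injective)]
  congr 1
  ext x
  simp only [Finset.mem_image, Finset.mem_filter, Finset.mem_univ, true_and, Finset.mem_Ico]
  constructor
  · rintro ⟨a, ⟨h1, h2⟩, rfl⟩; exact ⟨h1, h2⟩
  · rintro ⟨h1, h2⟩; exact ⟨⟨x, lt_of_lt_of_le h2 hd⟩, ⟨h1, h2⟩, rfl⟩

lemma card_val_le (m c : ℕ) :
    ((Finset.univ : Finset (Fin m)).filter fun t => c ≤ t.val).card = m - c := by
  classical
  rw [← card_val_between m c m le_rfl]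
  congr 1; ext t; simp [t.isLt]

lemma card_filter_perm {α : Type*} [Fintype α] [DecidableEq α] (τ : Equiv.Perm α)
    (p : α → Prop) [DecidablePred p] :
    ((Finset.univ : Finset α).filter fun s => p (τ s)).card
      = ((Finset.univ : Finset α).filter p).card := by
  apply Finset.card_bij (fun s _ => τ s)
  · intro a ha; simp at ha ⊢; exact ha
  · intro a _ b _ h; exact τ.injective h
  · intro b hb; simp at hb ⊢; exact ⟨τ.symm b, by simp [hb]⟩

def invSet {m : ℕ} (σ : Equiv.Perm (Fin m)) : Finset (Fin m × Fin m) :=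
  (Finset.univ).filter (fun p => p.1 < p.2 ∧ σ p.2 < σ p.1)

lemma invStat_eq {m : ℕ} (σ : Equiv.Perm (Fin m)) : invStat σ = (invSet σ).card := rfl

lemma mem_invSet {m : ℕ} {σ : Equiv.Perm (Fin m)} {p : Fin m × Fin m} :
    p ∈ invSet σ ↔ p.1 < p.2 ∧ σ p.2 < σ p.1 := by simp [invSet]

section counts
variable (k : Fin (n+1)) (τ : Equiv.Perm (Fin n))

local notation "a" => Fin.castSucc k
local notation "b" => Fin.last (n+1)
local notation "σ" => gp k τ

open scoped Classical in
lemma cardA : ((invSet (gp k τ)).filter fun p => p.2 = b).card = (n + 1) - k.val := by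
  classical
  have h1 : ((invSet (gp k τ)).filter fun p => p.2 = b)
      = (Finset.univ.filter fun i : Fin (n+2) => i ≠ b ∧ a < gf k τ i).image
        (fun i => (i, b)) := by
    ext p
    simp only [Finset.mem_filter, mem_invSet, Finset.mem_image, Finset.mem_univ, true_and]
    constructor
    · rintro ⟨⟨h1, h2⟩, h3⟩
      refine ⟨p.1, ⟨?_, ?_⟩, ?_⟩
      · exact Fin.ne_last_of_lt (h3 ▸ h1)
      · have : gf k τ p.2 = a := by rw [h3]; simp
        exact this ▸ h2
      · exact Prod.ext rfl h3.symm
    · rintro ⟨i, ⟨hi1, hi2⟩, rfl⟩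
      refine ⟨⟨Fin.lt_last_iff_ne_last.2 hi1, ?_⟩, rfl⟩
      simpa using hi2
  rw [h1, Finset.card_image_of_injective _ (fun x y h => (Prod.ext_iff.1 h).1)]
  have h2 : (Finset.univ.filter fun i : Fin (n+2) => i ≠ b ∧ a < gf k τ i)
      = insert a ((Finset.univ.filter fun s : Fin n => k.val ≤ (τ s).val).image (ins k)) := by
    ext x
    simp only [Finset.mem_filter, Finset.mem_univ, true_and, Finset.mem_insert,
      Finset.mem_image]
    rcases cases3 k x with h | h | ⟨i, h⟩ <;> subst h
    · simp only [ne_eq, not_true_eq_false, false_and, false_iff, not_or]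
      refine ⟨fun h => absurd h.symm (Fin.ne_of_lt (Fin.castSucc_lt_last k)), ?_⟩
      rintro ⟨s, _, hs⟩; exact ins_ne_last s hs
    · simp only [gf_csk]
      constructor
      · intro _; exact Or.inl trivial
      · intro _; exact ⟨Fin.ne_of_lt (Fin.castSucc_lt_last k), Fin.castSucc_lt_last k⟩
    · simp only [gf_ins, ins_ne_last i, ne_eq, not_false_eq_true, true_and]
      have key : a < ins k (τ i) ↔ k.val ≤ (τ i).val := by
        rw [ins, Fin.castSucc_lt_castSucc_iff, Fin.lt_succAbove_iff_le_castSucc,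
          Fin.le_def, Fin.coe_castSucc]
      rw [key]
      constructor
      · intro h; exact Or.inr ⟨i, h, rfl⟩
      · rintro (h | ⟨s, hs, hsi⟩)
        · exact absurd h (ins_ne_csk i)
        · rwa [← ins_inj k hsi]
  rw [h2, Finset.card_insert_of_notMem (by
    simp only [Finset.mem_image, not_exists]
    rintro s ⟨_, hs⟩; exact ins_ne_csk s hs),
    Finset.card_image_of_injective _ (ins_inj k),
    card_filter_perm τ (fun t => k.val ≤ t.val), card_val_le]
  omega


lemma cardB : ((invSet (gp k τ)).filter fun p => ¬p.2 = b ∧ (p.1 = a ∨ p.2 = a)).card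
    = n - k.val := by
  classical
  have h1 : ((invSet (gp k τ)).filter fun p => ¬p.2 = b ∧ (p.1 = a ∨ p.2 = a))
      = (Finset.univ.filter fun j : Fin (n+2) => a < j ∧ j ≠ b).image (fun j => (a, j)) := by
    ext p
    simp only [Finset.mem_filter, mem_invSet, Finset.mem_image, Finset.mem_univ, true_and]
    constructor
    · rintro ⟨⟨h1, h2⟩, h3, (h4 | h4)⟩
      · exact ⟨p.2, ⟨h4 ▸ h1, h3⟩, Prod.ext h4.symm rfl⟩
      · exfalso
        have : gf k τ p.2 = b := by rw [h4]; simp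
        simp only [gp_apply] at h2
        rw [this] at h2
        exact absurd h2 (not_lt.2 (Fin.le_last _))
    · rintro ⟨j, ⟨hj1, hj2⟩, rfl⟩
      have hja : j ≠ a := Fin.ne_of_gt hj1
      have hσj : gf k τ j ≠ b := by
        rcases cases3 k j with h | h | ⟨i, h⟩ <;> subst h
        · exact absurd rfl hj2
        · exact absurd rfl hja
        · simp only [gf_ins]; exact ins_ne_last _
      refine ⟨⟨hj1, ?_⟩, hj2, Or.inl rfl⟩
      simp only [gp_apply, gf_csk]
      exact Fin.lt_last_iff_ne_last.2 hσj
  rw [h1, Finset.card_image_of_injective _ (fun x y h => (Prod.ext_iff.1 h).2)]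
  have h2 : (Finset.univ.filter fun j : Fin (n+2) => a < j ∧ j ≠ b)
      = (Finset.univ.filter fun j : Fin (n+2) => k.val + 1 ≤ j.val ∧ j.val < n + 1) := by
    congr 1
    ext j
    have := j.isLt
    simp only [Fin.lt_def, Fin.coe_castSucc, ne_eq, Fin.ext_iff, Fin.val_last]
    omega
  rw [h2, card_val_between (n+2) (k.val+1) (n+1) (by omega)]
  omega

lemma cardC : ((invSet (gp k τ)).filter fun p => ¬p.2 = b ∧ ¬(p.1 = a ∨ p.2 = a)).card
    = invStat τ := by
  classical
  rw [invStat_eq]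
  symm
  apply Finset.card_bij (fun (q : Fin n × Fin n) _ => (ins k q.1, ins k q.2))
  · intro q hq
    rw [mem_invSet] at hq
    simp only [Finset.mem_filter, mem_invSet, gp_apply, gf_ins]
    exact ⟨⟨ins_lt_ins_iff.2 hq.1, ins_lt_ins_iff.2 hq.2⟩, ins_ne_last _,
      by push_neg; exact ⟨ins_ne_csk _, ins_ne_csk _⟩⟩
  · intro q1 _ q2 _ h
    obtain ⟨h1, h2⟩ := Prod.ext_iff.1 h
    exact Prod.ext (ins_inj k h1) (ins_inj k h2)
  · intro p hp
    simp only [Finset.mem_filter, mem_invSet] at hp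
    obtain ⟨⟨h1, h2⟩, h3, h4⟩ := hp
    push_neg at h4
    obtain ⟨h4, h5⟩ := h4
    have h6 : p.1 ≠ b := Fin.ne_last_of_lt h1
    rcases cases3 k p.1 with h | h | ⟨s, hs⟩
    · exact absurd h h6
    · exact absurd h h4
    rcases cases3 k p.2 with h | h | ⟨t, ht⟩
    · exact absurd h h3
    · exact absurd h h5
    refine ⟨(s, t), ?_, by rw [← hs, ← ht]⟩
    rw [mem_invSet]
    rw [hs, ht] at h1 h2
    simp only [gp_apply, gf_ins] at h2
    exact ⟨ins_lt_ins_iff.1 h1, ins_lt_ins_iff.1 h2⟩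

lemma invStat_gp : invStat (gp k τ) = invStat τ + 2 * (n - k.val) + 1 := by
  classical
  have e1 := Finset.card_filter_add_card_filter_not
    (s := invSet (gp k τ)) (p := fun p => p.2 = b)
  have e2 := Finset.card_filter_add_card_filter_not
    (s := (invSet (gp k τ)).filter fun p => ¬p.2 = b) (p := fun p => p.1 = a ∨ p.2 = a)
  rw [Finset.filter_filter, Finset.filter_filter] at e2
  have hA := cardA k τ
  have hB := cardB k τ
  have hC := cardC k τ
  have hk := k.isLt
  rw [invStat_eq]
  omega


lemma gp_invol (hτ : τ * τ = 1) : gp k τ * gp k τ = 1 := by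
  have hτ' : ∀ s, τ (τ s) = s := fun s => by
    conv_rhs => rw [← Equiv.Perm.one_apply s, ← hτ]
    rfl
  ext x
  rcases cases3 k x with h | h | ⟨i, h⟩ <;> subst h <;>
    simp [Equiv.Perm.mul_apply, hτ']

lemma gp_fpf (hf : ∀ i, τ i ≠ i) : ∀ x, gp k τ x ≠ x := by
  intro x
  rcases cases3 k x with h | h | ⟨i, h⟩ <;> subst h
  · simp only [gp_apply, gf_last]
    exact Fin.ne_of_lt (Fin.castSucc_lt_last k)
  · simp only [gp_apply, gf_csk]
    exact Fin.ne_of_gt (Fin.castSucc_lt_last k)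
  · simp only [gp_apply, gf_ins]
    exact fun h => hf i (ins_inj k h)

end counts

lemma gp_surj (π : Equiv.Perm (Fin (n+2))) (hinv : π * π = 1) (hf : ∀ x, π x ≠ x) :
    ∃ (k : Fin (n+1)) (τ : Equiv.Perm (Fin n)),
      τ * τ = 1 ∧ (∀ i, τ i ≠ i) ∧ gp k τ = π := by
  classical
  have hππ : ∀ x, π (π x) = x := fun x => by
    conv_rhs => rw [← Equiv.Perm.one_apply x, ← hinv]
    rfl
  obtain ⟨k, hk⟩ := Fin.exists_castSucc_eq.mpr (hf (Fin.last (n+1)))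
  have hex : ∀ s : Fin n, ∃ i : Fin n, π (ins k s) = ins k i := by
    intro s
    rcases cases3 k (π (ins k s)) with h | h | ⟨i, h⟩
    · exfalso
      have h2 := congrArg π h
      rw [hππ] at h2
      exact ins_ne_csk s (by rw [h2, ← hk])
    · exfalso
      have h2 := congrArg π h
      rw [hππ] at h2
      exact ins_ne_last s (by rw [h2, hk, hππ])
    · exact ⟨i, h⟩
  choose t ht using hex
  have htt : ∀ s, t (t s) = s := by
    intro s
    apply ins_inj k
    rw [← ht (t s), ← ht s, hππ]
  refine ⟨k, ⟨t, t, htt, htt⟩, ?_, ?_, ?_⟩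
  · ext s; simp [Equiv.Perm.mul_apply, htt s]
  · intro i h
    simp only [Equiv.coe_fn_mk] at h
    exact hf (ins k i) (by rw [ht i, h])
  · ext x
    rcases cases3 k x with h | h | ⟨i, h⟩ <;> subst h
    · simp only [gp_apply, gf_last, hk]
    · simp only [gp_apply, gf_csk]
      rw [hk, hππ]
    · simp only [gp_apply, gf_ins]
      exact congrArg Fin.val (ht i).symm

lemma gp_inj {k k' : Fin (n+1)} {τ τ' : Equiv.Perm (Fin n)}
    (h : gp k τ = gp k' τ') : k = k' ∧ τ = τ' := by
  have hl := congrArg (fun π : Equiv.Perm (Fin (n+2)) => π (Fin.last (n+1))) h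
  simp only [gp_apply, gf_last] at hl
  have hk : k = k' := Fin.castSucc_injective _ hl
  subst hk
  refine ⟨rfl, ?_⟩
  ext s
  have := congrArg (fun π : Equiv.Perm (Fin (n+2)) => π (ins k s)) h
  simp only [gp_apply, gf_ins] at this
  exact congrArg Fin.val (ins_inj k this)


end FPFRec

lemma mem_FPFInvols {m : ℕ} {σ : Equiv.Perm (Fin m)} :
    σ ∈ FPFInvols m ↔ σ * σ = 1 ∧ ∀ i, σ i ≠ i := by
  simp [FPFInvols]

lemma JPoly_succ (n : ℕ) :
    JPoly (n+2) = (∑ k : Fin (n+1), (X : Polynomial ℚ)^(2*(n - k.val)+1)) * JPoly n := by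
  classical
  have hbij : ∑ q ∈ (Finset.univ : Finset (Fin (n+1))) ×ˢ FPFInvols n,
      (X : Polynomial ℚ) ^ (2*(n - q.1.val) + 1 + invStat q.2)
      = ∑ σ ∈ FPFInvols (n+2), (X : Polynomial ℚ) ^ invStat σ := by
    apply Finset.sum_bij (fun q _ => FPFRec.gp q.1 q.2)
    · intro q hq
      rw [Finset.mem_product, mem_FPFInvols] at hq
      rw [mem_FPFInvols]
      exact ⟨FPFRec.gp_invol _ _ hq.2.1, FPFRec.gp_fpf _ _ hq.2.2⟩
    · intro q1 _ q2 _ h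
      obtain ⟨hk, ht⟩ := FPFRec.gp_inj h
      exact Prod.ext hk ht
    · intro σ hσ
      rw [mem_FPFInvols] at hσ
      obtain ⟨k, τ, h1, h2, h3⟩ := FPFRec.gp_surj σ hσ.1 hσ.2
      exact ⟨(k, τ), by rw [Finset.mem_product, mem_FPFInvols]; exact ⟨Finset.mem_univ _, h1, h2⟩, h3⟩
    · intro q hq
      rw [FPFRec.invStat_gp]
      congr 1
      omega
  rw [JPoly, JPoly, ← hbij, Finset.sum_product, Finset.sum_mul]
  apply Finset.sum_congr rfl
  intro k _
  rw [Finset.mul_sum]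
  apply Finset.sum_congr rfl
  intro τ _
  rw [pow_add]

lemma geomS (n : ℕ) :
    (1 - X^2 : Polynomial ℚ) * (∑ k : Fin (n+1), (X : Polynomial ℚ)^(2*(n - k.val)+1))
      = X * (1 - X^(2*(n+1))) := by
  have h1 : (∑ k : Fin (n+1), (X : Polynomial ℚ)^(2*(n - k.val)+1))
      = ∑ j ∈ Finset.range (n+1), (X : Polynomial ℚ)^(2*j+1) := by
    rw [Fin.sum_univ_eq_sum_range (fun i => (X : Polynomial ℚ)^(2*(n-i)+1)) (n+1),
      ← Finset.sum_range_reflect]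
    apply Finset.sum_congr rfl
    intro j hj
    rw [Finset.mem_range] at hj
    congr 2
    omega
  have h2 : ∑ j ∈ Finset.range (n+1), (X : Polynomial ℚ)^(2*j+1)
      = (∑ j ∈ Finset.range (n+1), ((X : Polynomial ℚ)^2)^j) * X := by
    rw [Finset.sum_mul]
    apply Finset.sum_congr rfl
    intro j _
    rw [pow_succ, pow_mul]
  rw [h1, h2]
  have h3 : (X : Polynomial ℚ)^(2*(n+1)) = ((X : Polynomial ℚ)^2)^(n+1) := by
    rw [pow_mul]
  rw [h3]
  have g := geom_sum_mul ((X : Polynomial ℚ)^2) (n+1)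
  linear_combination (-(X : Polynomial ℚ)) * g

theorem fpf_involution_inversion_recurrence :
    (∀ n : ℕ, (1 - X ^ 2) * JPoly (n + 2) = X * (1 - X ^ (2 * (n + 1))) * JPoly n) ∧
    JPoly 0 = 1 := by
  constructor
  · intro n
    rw [JPoly_succ n, ← mul_assoc, geomS n]
  · have h0 : FPFInvols 0 = {1} := by
      ext σ
      rw [mem_FPFInvols, Finset.mem_singleton]
      constructor
      · intro _; exact Subsingleton.elim _ _
      · intro _; exact ⟨Subsingleton.elim _ _, fun i => i.elim0⟩
    rw [JPoly, h0, Finset.sum_singleton]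
    have : invStat (1 : Equiv.Perm (Fin 0)) = 0 := by
      rw [invStat]
      simp
    rw [this, pow_zero]
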